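/- Let $K \in H^1([0,1]; \mathbb{R}^{d\times d})$ (so $K$ is $\tfrac{1}{2}$-Hölder continuous with constant $L$), and for each $n \in \mathbb{N}$ let $K^{(n)} : \{0,\dots,n-1\} \to \mathbb{R}^{d\times d}$. Define the piecewise constant extension $\tilde K^{(n)}(t) = K^{(n)}_i$ for $t \in [i/n, (i+1)/n)$. Suppose there exists $C_1 > 0$ such that for all $n$, $\|\tilde K^{(n)} - K\|_{L^2([0,1])} \leq C_1 n^{-1}$. Then $\max_{0 \leq i \leq n-1} \|K(i/n) - K^{(n)}_i\| \to 0$ as $n \to \infty$. -/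

import Mathlib

open Set MeasureTheory

lemma holder_continuousOn {E : Type*} [NormedAddCommGroup E]
    (K : ℝ → E) (L : ℝ) (hL : 0 < L)
    (hHolder : ∀ s ∈ Icc (0:ℝ) 1, ∀ t ∈ Icc (0:ℝ) 1, ‖K s - K t‖ ≤ L * Real.sqrt |s - t|) :
    ContinuousOn K (Icc (0:ℝ) 1) := by
  intro t ht
  rw [Metric.continuousWithinAt_iff]
  intro ε hε
  refine ⟨(ε / L) ^ 2 / 2, by positivity, fun s hs hst => ?_⟩
  have h1 : ‖K s - K t‖ ≤ L * Real.sqrt |s - t| := hHolder s hs t ht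
  have h2 : Real.sqrt |s - t| < ε / L := by
    have hlt : |s - t| < (ε / L) ^ 2 := by
      calc |s - t| = dist s t := (Real.dist_eq s t).symm
        _ < (ε / L) ^ 2 / 2 := hst
        _ ≤ (ε / L) ^ 2 := by nlinarith [sq_nonneg (ε / L)]
    calc Real.sqrt |s - t| < Real.sqrt ((ε / L) ^ 2) :=
          Real.sqrt_lt_sqrt (abs_nonneg _) hlt
      _ = ε / L := by rw [Real.sqrt_sq (by positivity)]
  rw [dist_eq_norm]
  calc ‖K s - K t‖ ≤ L * Real.sqrt |s - t| := h1
    _ < L * (ε / L) := mul_lt_mul_of_pos_left h2 hL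
    _ = ε := by field_simp

set_option maxHeartbeats 1000000

lemma floor_piece (n j : ℕ) (hn : 1 ≤ n) (t : ℝ)
    (ht : t ∈ Ico ((j : ℝ) / n) (((j : ℝ) + 1) / n)) :
    ⌊(n : ℝ) * t⌋₊ = j := by
  have hnpos : (0:ℝ) < n := by exact_mod_cast hn
  obtain ⟨h1, h2⟩ := ht
  have hle : (j : ℝ) ≤ (n : ℝ) * t := by
    rw [div_le_iff₀ hnpos] at h1; linarith [h1]
  have hlt : (n : ℝ) * t < (j : ℝ) + 1 := by
    rw [lt_div_iff₀ hnpos] at h2; linarith [h2]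
  rw [Nat.floor_eq_iff (le_trans (by positivity : (0:ℝ) ≤ (j:ℝ)) hle)]
  exact ⟨hle, hlt⟩

/-- If piecewise-constant discretizations converge in `L²([0,1])` at rate `O(1/n)` to a
`½`-Hölder continuous function `K` (e.g. the Hölder representative of an `H¹` function),
then they converge uniformly at the grid points. -/
theorem grid_convergence_from_L2_rate
    (d : ℕ) (K : ℝ → EuclideanSpace ℝ (Fin d × Fin d)) (L : ℝ) (hL : 0 < L)
    (hHolder : ∀ s ∈ Icc (0:ℝ) 1, ∀ t ∈ Icc (0:ℝ) 1, ‖K s - K t‖ ≤ L * Real.sqrt |s - t|)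
    (Kn : ℕ → ℕ → EuclideanSpace ℝ (Fin d × Fin d))
    (C₁ : ℝ) (hC₁ : 0 < C₁)
    (hL2 : ∀ n : ℕ, 1 ≤ n →
      (∫ t in (0:ℝ)..1, ‖Kn n ⌊(n : ℝ) * t⌋₊ - K t‖ ^ 2) ≤ (C₁ / n) ^ 2) :
    ∀ ε > 0, ∃ N : ℕ, ∀ n ≥ N, ∀ i < n, ‖K (i / n) - Kn n i‖ < ε := by
  intro ε hε
  have hKcont : ContinuousOn K (Icc (0:ℝ) 1) := holder_continuousOn K L hL hHolder
  refine ⟨⌈(2 * L / ε) ^ 2⌉₊ + ⌈4 * C₁ ^ 2 / ε ^ 2⌉₊ + 1, fun n hn i hi => ?_⟩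
  have hn1 : 1 ≤ n := by omega
  have hnpos : (0:ℝ) < n := by exact_mod_cast hn1
  -- numeric conditions on n
  have hcond1 : (2 * L / ε) ^ 2 ≤ (n : ℝ) := by
    calc (2 * L / ε) ^ 2 ≤ (⌈(2 * L / ε) ^ 2⌉₊ : ℝ) := Nat.le_ceil _
      _ ≤ (n : ℝ) := by exact_mod_cast (by omega : ⌈(2 * L / ε) ^ 2⌉₊ ≤ n)
  have hcond2 : 4 * C₁ ^ 2 / ε ^ 2 < (n : ℝ) := by
    calc 4 * C₁ ^ 2 / ε ^ 2 ≤ (⌈4 * C₁ ^ 2 / ε ^ 2⌉₊ : ℝ) := Nat.le_ceil _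
      _ < (n : ℝ) := by exact_mod_cast (by omega : ⌈4 * C₁ ^ 2 / ε ^ 2⌉₊ < n)
  by_contra hcon
  push_neg at hcon
  -- the bad interval [a, b]
  set a : ℝ := (i : ℝ) / n with ha
  set b : ℝ := ((i : ℝ) + 1) / n with hb
  have hab : a ≤ b := by
    apply (div_le_div_iff_of_pos_right hnpos).mpr; linarith
  have ha0 : 0 ≤ a := by positivity
  have hb1 : b ≤ 1 := by
    rw [hb, div_le_one hnpos]
    have : (i : ℝ) + 1 ≤ (n : ℝ) := by exact_mod_cast hi
    linarith
  have hsub : Icc a b ⊆ Icc (0:ℝ) 1 := Icc_subset_Icc ha0 hb1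
  -- pointwise lower bound on [a, b]
  have hlow : ∀ t ∈ Icc a b, ε / 2 ≤ ‖Kn n i - K t‖ := by
    intro t ht
    have htI : t ∈ Icc (0:ℝ) 1 := hsub ht
    have haI : a ∈ Icc (0:ℝ) 1 := hsub ⟨le_refl a, hab⟩
    have hKa : ‖K a - K t‖ ≤ ε / 2 := by
      have h1 : ‖K a - K t‖ ≤ L * Real.sqrt |a - t| := hHolder a haI t htI
      have h2 : |a - t| ≤ 1 / n := by
        rw [abs_sub_comm, abs_of_nonneg (by linarith [ht.1] : (0:ℝ) ≤ t - a)]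
        have : b - a = 1 / n := by rw [ha, hb]; field_simp; ring
        linarith [ht.2]
      have h3 : Real.sqrt |a - t| ≤ ε / (2 * L) := by
        have hn' : (1:ℝ) / n ≤ (ε / (2 * L)) ^ 2 := by
          rw [div_le_iff₀ hnpos]
          have he : (0:ℝ) < (2 * L / ε) ^ 2 := by positivity
          have : (ε / (2 * L)) ^ 2 * (2 * L / ε) ^ 2 = 1 := by field_simp
          nlinarith [mul_le_mul_of_nonneg_left hcond1 (le_of_lt (by positivity : (0:ℝ) < (ε / (2 * L)) ^ 2))]
        calc Real.sqrt |a - t| ≤ Real.sqrt ((ε / (2 * L)) ^ 2) :=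
              Real.sqrt_le_sqrt (h2.trans hn')
          _ = ε / (2 * L) := Real.sqrt_sq (by positivity)
      calc ‖K a - K t‖ ≤ L * Real.sqrt |a - t| := h1
        _ ≤ L * (ε / (2 * L)) := by nlinarith
        _ = ε / 2 := by field_simp
    have hεle : ε ≤ ‖K a - Kn n i‖ := hcon
    have htri : ‖K a - Kn n i‖ ≤ ‖K a - K t‖ + ‖K t - Kn n i‖ := by
      calc ‖K a - Kn n i‖ = ‖(K a - K t) + (K t - Kn n i)‖ := by
            rw [sub_add_sub_cancel]
        _ ≤ ‖K a - K t‖ + ‖K t - Kn n i‖ := norm_add_le _ _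
    have : ε / 2 ≤ ‖K t - Kn n i‖ := by linarith
    rwa [norm_sub_rev]
  -- the integrand
  set f : ℝ → ℝ := fun t => ‖Kn n ⌊(n : ℝ) * t⌋₊ - K t‖ ^ 2 with hf
  have hf0 : ∀ t, 0 ≤ f t := fun t => by positivity
  -- integrability of f on each piece
  have hpiece : ∀ j : ℕ, j < n → IntervalIntegrable f volume ((j:ℝ)/n) (((j:ℝ)+1)/n) := by
    intro j hj
    have habj : (j:ℝ)/n ≤ ((j:ℝ)+1)/n := (div_le_div_iff_of_pos_right hnpos).mpr (by linarith)
    have hsubj : Icc ((j:ℝ)/n) (((j:ℝ)+1)/n) ⊆ Icc (0:ℝ) 1 := by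
      apply Icc_subset_Icc (by positivity)
      rw [div_le_one hnpos]
      have : (j : ℝ) + 1 ≤ (n : ℝ) := by exact_mod_cast hj
      linarith
    have hg : IntervalIntegrable (fun t => ‖Kn n j - K t‖ ^ 2) volume ((j:ℝ)/n) (((j:ℝ)+1)/n) := by
      apply ContinuousOn.intervalIntegrable
      rw [uIcc_of_le habj]
      exact ((continuousOn_const.sub (hKcont.mono hsubj)).norm.pow 2)
    apply hg.congr_ae
    have hmem : ∀ᵐ t ∂(volume.restrict (uIoc ((j:ℝ)/n) (((j:ℝ)+1)/n))),
        t ∈ uIoc ((j:ℝ)/n) (((j:ℝ)+1)/n) := ae_restrict_mem measurableSet_uIoc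
    have hne : ∀ᵐ t ∂(volume.restrict (uIoc ((j:ℝ)/n) (((j:ℝ)+1)/n))), t ≠ ((j:ℝ)+1)/n := by
      refine ae_restrict_of_ae ?_
      exact ae_iff.mpr (by simpa using measure_singleton (((j:ℝ)+1)/n))
    filter_upwards [hmem, hne] with t htmem htne
    rw [uIoc_of_le habj] at htmem
    have : t ∈ Ico ((j:ℝ)/n) (((j:ℝ)+1)/n) :=
      ⟨htmem.1.le, lt_of_le_of_ne htmem.2 htne⟩
    show ‖Kn n j - K t‖ ^ 2 = ‖Kn n ⌊(n : ℝ) * t⌋₊ - K t‖ ^ 2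
    rw [floor_piece n j hn1 t this]
  -- integrability of f on [0, m/n] by induction
  have hint : ∀ m : ℕ, m ≤ n → IntervalIntegrable f volume 0 ((m:ℝ)/n) := by
    intro m
    induction m with
    | zero => intro _; simp
    | succ m ih =>
      intro hm
      have h1 : IntervalIntegrable f volume 0 ((m:ℝ)/n) := ih (by omega)
      have h2 : IntervalIntegrable f volume ((m:ℝ)/n) (((m:ℝ)+1)/n) := hpiece m (by omega)
      have := h1.trans h2
      convert this using 2
      push_cast; ring
  have hfint : IntervalIntegrable f volume 0 1 := by
    have := hint n le_rfl
    rwa [div_self (ne_of_gt hnpos)] at this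
  -- lower bound for integral over [a, b]
  have hI1 : ∫ t in a..b, f t = ∫ t in a..b, ‖Kn n i - K t‖ ^ 2 := by
    apply intervalIntegral.integral_congr_ae
    have hne : ∀ᵐ t ∂volume, t ≠ b :=
      ae_iff.mpr (by simpa using measure_singleton b)
    filter_upwards [hne] with t htne htmem
    rw [uIoc_of_le hab] at htmem
    have : t ∈ Ico a b := ⟨htmem.1.le, lt_of_le_of_ne htmem.2 htne⟩
    show ‖Kn n ⌊(n : ℝ) * t⌋₊ - K t‖ ^ 2 = ‖Kn n i - K t‖ ^ 2
    rw [floor_piece n i hn1 t this]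
  have hgint : IntervalIntegrable (fun t => ‖Kn n i - K t‖ ^ 2) volume a b := by
    apply ContinuousOn.intervalIntegrable
    rw [uIcc_of_le hab]
    exact ((continuousOn_const.sub (hKcont.mono hsub)).norm.pow 2)
  have hI2 : (ε/2)^2 * (1/n) ≤ ∫ t in a..b, ‖Kn n i - K t‖ ^ 2 := by
    have hba : b - a = 1 / n := by rw [ha, hb]; field_simp; ring
    have := intervalIntegral.integral_mono_on hab
      (intervalIntegrable_const : IntervalIntegrable (fun _ => (ε/2)^2) volume a b) hgint
      (fun t ht => by
        have := hlow t ht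
        have h0 : (0:ℝ) ≤ ε / 2 := by linarith
        nlinarith)
    rw [intervalIntegral.integral_const, smul_eq_mul] at this
    calc (ε/2)^2 * (1/n) = (b - a) * (ε/2)^2 := by rw [hba]; ring
      _ ≤ _ := this
  -- compare with integral over [0, 1]
  have hI3 : ∫ t in a..b, f t ≤ ∫ t in (0:ℝ)..1, f t := by
    apply intervalIntegral.integral_mono_interval ha0 hab hb1 _ hfint
    filter_upwards with t
    exact hf0 t
  have hI4 : (∫ t in (0:ℝ)..1, f t) ≤ (C₁ / n) ^ 2 := hL2 n hn1
  -- contradiction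
  have hfinal : (ε/2)^2 * (1/n) ≤ (C₁ / n)^2 := by
    rw [hI1] at hI3
    linarith
  have h1 : (ε/2)^2 * (1/n) = ε^2 / 4 / n := by ring
  have h2 : (C₁/n)^2 = C₁^2 / n^2 := by ring
  rw [h1, h2] at hfinal
  have hn2 : (0:ℝ) < (n:ℝ)^2 := by positivity
  have key : ε^2 / 4 * n ≤ C₁^2 := by
    have := mul_le_mul_of_nonneg_right hfinal (le_of_lt hn2)
    calc ε^2 / 4 * n = ε^2 / 4 / n * (n:ℝ)^2 := by field_simp
      _ ≤ C₁^2 / n^2 * (n:ℝ)^2 := this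
      _ = C₁^2 := by field_simp
  have : 4 * C₁ ^ 2 / ε ^ 2 * ε ^ 2 < (n:ℝ) * ε ^ 2 :=
    mul_lt_mul_of_pos_right hcond2 (by positivity)
  have h4 : 4 * C₁ ^ 2 / ε ^ 2 * ε ^ 2 = 4 * C₁ ^ 2 := by field_simp
  nlinarith
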